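/- arXiv:2302.03672 — 5 statements merged into one kernel-verified Lean document; each statement's English description precedes it below -/
import Mathlib

section
/- Every output of sequential Phragmén satisfies PJR-x with respect to every DNS satisfaction function μ. -/
open Finset

namespace ABB

variable {V P : Type} [Fintype V] [DecidableEq V] [Fintype P] [DecidableEq P]

/-- Total cost of a set of projects. -/
def costOf (c : P → ℝ) (S : Finset P) : ℝ := ∑ p ∈ S, c p

/-- `μ` is an (approval-based) satisfaction function: monotone w.r.t. inclusion,
nonnegative, and zero exactly on the empty set. -/
def IsSatFun (μ : Finset P → ℝ) : Prop :=
  (∀ S T : Finset P, S ⊆ T → μ S ≤ μ T) ∧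
  (∀ S : Finset P, μ S = 0 ↔ S = ∅) ∧
  (∀ S : Finset P, 0 ≤ μ S)

/-- `μ` is strictly increasing. -/
def StrictlyIncreasing (μ : Finset P → ℝ) : Prop :=
  ∀ S T : Finset P, S ⊂ T → μ S < μ T

/-- `μ` is cost-neutral: sets related by a cost-preserving bijection get equal satisfaction. -/
def CostNeutral (c : P → ℝ) (μ : Finset P → ℝ) : Prop :=
  ∀ S T : Finset P,
    (∃ f : {p // p ∈ S} → {p // p ∈ T},
        Function.Bijective f ∧ ∀ p : {p // p ∈ S}, c p.val = c (f p).val) →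
    μ S = μ T

/-- `μ` is additive. -/
def Additive (μ : Finset P → ℝ) : Prop :=
  ∀ S : Finset P, μ S = ∑ p ∈ S, μ {p}

/-- `μ` is strictly cost-responsive. -/
def StrictlyCostResponsive (c : P → ℝ) (μ : Finset P → ℝ) : Prop :=
  ∀ S T : Finset P, costOf c S < costOf c T → μ S < μ T

/-- The instance is a unit-cost instance. -/
def UnitCost (c : P → ℝ) : Prop := ∀ p : P, c p = 1

/-- `μ` has weakly decreasing normalized satisfaction (DNS): it is additive, and for
projects `p, p'` with `c p ≤ c p'` we have `μ {p} ≤ μ {p'}` and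
`μ {p} / c p ≥ μ {p'} / c p'`. -/
def DNS (c : P → ℝ) (μ : Finset P → ℝ) : Prop :=
  Additive μ ∧
  ∀ p p' : P, c p ≤ c p' → μ {p} ≤ μ {p'} ∧ μ {p'} / c p' ≤ μ {p} / c p

/-- A (nonempty) group `N'` of voters is `T`-cohesive. -/
def Cohesive (A : V → Finset P) (c : P → ℝ) (b : ℝ)
    (N' : Finset V) (T : Finset P) : Prop :=
  N'.Nonempty ∧ (∀ i ∈ N', T ⊆ A i) ∧
    costOf c T ≤ ((N'.card : ℝ) / (Fintype.card V : ℝ)) * b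

/-- Extended justified representation w.r.t. `μ`. -/
def EJR (A : V → Finset P) (c : P → ℝ) (b : ℝ) (μ : Finset P → ℝ) (W : Finset P) : Prop :=
  ∀ (N' : Finset V) (T : Finset P), Cohesive A c b N' T →
    ∃ i ∈ N', μ T ≤ μ (A i ∩ W)

/-- EJR up to one project w.r.t. `μ`. -/
def EJR1 (A : V → Finset P) (c : P → ℝ) (b : ℝ) (μ : Finset P → ℝ) (W : Finset P) : Prop :=
  ∀ (N' : Finset V) (T : Finset P), Cohesive A c b N' T →
    T ⊆ W ∨ ∃ i ∈ N', ∃ p ∉ W, μ T < μ (A i ∩ insert p W)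

/-- EJR up to any project w.r.t. `μ`. -/
def EJRx (A : V → Finset P) (c : P → ℝ) (b : ℝ) (μ : Finset P → ℝ) (W : Finset P) : Prop :=
  ∀ (N' : Finset V) (T : Finset P), Cohesive A c b N' T →
    ∃ i ∈ N', ∀ p ∈ T \ W, μ T < μ (A i ∩ insert p W)

/-- `μ`-EJR-1⁺: like EJR-1, but the additional project must come from `T`. -/
def EJR1plus (A : V → Finset P) (c : P → ℝ) (b : ℝ) (μ : Finset P → ℝ) (W : Finset P) : Prop :=
  ∀ (N' : Finset V) (T : Finset P), Cohesive A c b N' T →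
    T ⊆ W ∨ ∃ i ∈ N', ∃ p ∈ T \ W, μ T < μ (A i ∩ insert p W)

/-- Proportional justified representation w.r.t. `μ`. -/
def PJR (A : V → Finset P) (c : P → ℝ) (b : ℝ) (μ : Finset P → ℝ) (W : Finset P) : Prop :=
  ∀ (N' : Finset V) (T : Finset P), Cohesive A c b N' T →
    μ T ≤ μ (W ∩ N'.biUnion A)

/-- PJR up to any project w.r.t. `μ`. -/
def PJRx (A : V → Finset P) (c : P → ℝ) (b : ℝ) (μ : Finset P → ℝ) (W : Finset P) : Prop :=
  ∀ (N' : Finset V) (T : Finset P), Cohesive A c b N' T →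
    ∀ p ∈ T \ W, μ T < μ (insert p (W ∩ N'.biUnion A))

/-- `μ`-Local-BPJR. -/
def LocalBPJR (A : V → Finset P) (c : P → ℝ) (b : ℝ) (μ : Finset P → ℝ) (W : Finset P) : Prop :=
  ¬ ∃ (N' : Finset V) (T Wstar : Finset P),
      Cohesive A c b N' T ∧
      N'.biUnion A ∩ W ⊂ Wstar ∧
      (∀ i ∈ N', Wstar ⊆ A i) ∧
      costOf c Wstar ≤ costOf c T ∧
      (∀ W' : Finset P, (∀ i ∈ N', W' ⊆ A i) → costOf c W' ≤ costOf c T → μ W' ≤ μ Wstar)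

/-- The set of approvers of a project. -/
def approvers (A : V → Finset P) (p : P) : Finset V :=
  Finset.univ.filter (fun i => p ∈ A i)

/-- `p` is `ρ`-affordable given per-voter remaining budgets `bud`. -/
def Affordable (A : V → Finset P) (c : P → ℝ) (μ : Finset P → ℝ)
    (bud : V → ℝ) (p : P) (ρ : ℝ) : Prop :=
  ∑ i ∈ approvers A p, min (bud i) (ρ * μ {p}) = c p

/-- The states (selected set, remaining budgets) reachable by the Method of Equal Shares,
starting from initial per-voter budget `b0`. -/
inductive MESReach (A : V → Finset P) (c : P → ℝ) (μ : Finset P → ℝ) (b0 : ℝ) :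
    Finset P → (V → ℝ) → Prop
  | init : MESReach A c μ b0 ∅ (fun _ => b0)
  | step {W : Finset P} {bud : V → ℝ} {p : P} {ρ : ℝ} :
      MESReach A c μ b0 W bud →
      p ∉ W → 0 ≤ ρ →
      Affordable A c μ bud p ρ →
      (∀ p' ∉ W, ∀ ρ' : ℝ, 0 ≤ ρ' → Affordable A c μ bud p' ρ' → ρ ≤ ρ') →
      MESReach A c μ b0 (insert p W)
        (fun i => if p ∈ A i then bud i - min (bud i) (ρ * μ {p}) else bud i)

/-- `W` is an output of MES[μ]: it is reachable and no further project is affordable. -/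
def MESOutput (A : V → Finset P) (c : P → ℝ) (b : ℝ) (μ : Finset P → ℝ) (W : Finset P) : Prop :=
  ∃ bud : V → ℝ,
    MESReach A c μ (b / (Fintype.card V : ℝ)) W bud ∧
    ∀ p ∉ W, ∀ ρ : ℝ, 0 ≤ ρ → ¬ Affordable A c μ bud p ρ

/-- `(B, d)` is a price system for `W` (conditions C1–C5). -/
def PriceSystem (A : V → Finset P) (c : P → ℝ) (W : Finset P)
    (B : ℝ) (d : V → P → ℝ) : Prop :=
  0 < B ∧
  (∀ (i : V) (p : P), 0 ≤ d i p ∧ d i p ≤ B / (Fintype.card V : ℝ)) ∧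
  (∀ (i : V) (p : P), 0 < d i p → p ∈ A i) ∧
  (∀ (i : V) (p : P), 0 < d i p → p ∈ W) ∧
  (∀ i : V, ∑ p : P, d i p ≤ B / (Fintype.card V : ℝ)) ∧
  (∀ p ∈ W, ∑ i : V, d i p = c p) ∧
  (∀ p ∉ W, ∑ i ∈ approvers A p, (B / (Fintype.card V : ℝ) - ∑ p' : P, d i p') ≤ c p)

/-- Condition C6 for a payment function `d`. -/
def C6 (A : V → Finset P) (c : P → ℝ) (W : Finset P) (d : V → P → ℝ) : Prop :=
  ∀ p ∉ W, ∀ p' ∈ W, ∑ i ∈ approvers A p, d i p' ≤ c p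

/-- Unselected projects with at least one approver. -/
def phragCandidates (A : V → Finset P) (W : Finset P) : Finset P :=
  Finset.univ.filter (fun p => p ∉ W ∧ (approvers A p).Nonempty)

/-- Sequential Phragmén's value `t(p)` given loads `l`. -/
noncomputable def phragLoad (A : V → Finset P) (c : P → ℝ) (l : V → ℝ) (p : P) : ℝ :=
  (c p + ∑ i ∈ approvers A p, l i) / ((approvers A p).card : ℝ)

/-- The states (selected set, loads) reachable by sequential Phragmén. -/
inductive PhragReach (A : V → Finset P) (c : P → ℝ) (b : ℝ) :
    Finset P → (V → ℝ) → Prop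
  | init : PhragReach A c b ∅ (fun _ => 0)
  | step {W : Finset P} {l : V → ℝ} {p : P} :
      PhragReach A c b W l →
      p ∈ phragCandidates A W →
      (∀ p' ∈ phragCandidates A W, phragLoad A c l p ≤ phragLoad A c l p') →
      (∀ p' ∈ phragCandidates A W,
        (∀ p'' ∈ phragCandidates A W, phragLoad A c l p' ≤ phragLoad A c l p'') →
        costOf c W + c p' ≤ b) →
      PhragReach A c b (insert p W)
        (fun i => if p ∈ A i then phragLoad A c l p else l i)

/-- `W` is an output of sequential Phragmén: it is reachable and the rule terminates at `W`
(either no candidate is left, or some minimizer of `t` would exceed the budget). -/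
def PhragOutput (A : V → Finset P) (c : P → ℝ) (b : ℝ) (W : Finset P) : Prop :=
  ∃ l : V → ℝ, PhragReach A c b W l ∧
    (phragCandidates A W = ∅ ∨
      ∃ p ∈ phragCandidates A W,
        (∀ p' ∈ phragCandidates A W, phragLoad A c l p ≤ phragLoad A c l p') ∧
        b < costOf c W + c p)

section Aux

open Finset

variable {V P : Type} [Fintype V] [DecidableEq V] [Fintype P] [DecidableEq P]

lemma mem_approvers' {A : V → Finset P} {i : V} {p : P} :
    i ∈ ABB.approvers A p ↔ p ∈ A i := by simp [ABB.approvers]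

lemma mem_phragCandidates' {A : V → Finset P} {W : Finset P} {p : P} :
    p ∈ ABB.phragCandidates A W ↔ p ∉ W ∧ (ABB.approvers A p).Nonempty := by
  simp [ABB.phragCandidates]

lemma approvers_card_pos {A : V → Finset P} {p : P} (h : (ABB.approvers A p).Nonempty) :
    (0:ℝ) < ((ABB.approvers A p).card : ℝ) := by
  exact_mod_cast Finset.card_pos.mpr h

lemma phragLoad_mul {A : V → Finset P} {c : P → ℝ} {l : V → ℝ} {p : P}
    (h : (ABB.approvers A p).Nonempty) :
    ABB.phragLoad A c l p * ((ABB.approvers A p).card : ℝ)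
      = c p + ∑ i ∈ ABB.approvers A p, l i := by
  have h0 : ((ABB.approvers A p).card : ℝ) ≠ 0 := ne_of_gt (approvers_card_pos h)
  unfold ABB.phragLoad
  field_simp

lemma phrag_inv {A : V → Finset P} {c : P → ℝ} {b : ℝ} (hc : ∀ p, 0 < c p)
    {W : Finset P} {l : V → ℝ} (h : ABB.PhragReach A c b W l) :
    (∀ i, 0 ≤ l i) ∧
    (∀ p ∈ ABB.phragCandidates A W, ∀ i, l i ≤ ABB.phragLoad A c l p) ∧
    ∃ d : V → P → ℝ,
      (∀ i p, 0 ≤ d i p) ∧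
      (∀ i p, d i p ≠ 0 → p ∈ A i ∧ p ∈ W) ∧
      (∀ p ∈ W, ∑ i, d i p = c p) ∧
      (∀ i, ∑ p, d i p = l i) ∧
      (∀ p, p ∉ W → (ABB.approvers A p).Nonempty →
        ∀ w ∈ W, ∑ i ∈ ABB.approvers A p, d i w ≤ c p) := by
  induction h with
  | init =>
      refine ⟨fun i => le_refl 0, ?_, fun _ _ => 0, fun _ _ => le_refl 0,
        fun i p hp => absurd rfl hp, fun p hp => absurd hp (Finset.notMem_empty p),
        fun i => by simp, fun p _ _ w hw => absurd hw (Finset.notMem_empty w)⟩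
      intro p hp i
      rw [mem_phragCandidates'] at hp
      have hcard := approvers_card_pos hp.2
      have : (0:ℝ) ≤ c p + ∑ i ∈ ABB.approvers A p, (0:ℝ) := by
        simp; exact (hc p).le
      unfold ABB.phragLoad
      positivity
  | @step W l p hreach hcand hmin hfit ih =>
      obtain ⟨hl0, hI3, d, hd0, hdsupp, hdcol, hdrow, hC6⟩ := ih
      set t := ABB.phragLoad A c l p with ht
      have hlt : ∀ i, l i ≤ t := hI3 p hcand
      rw [mem_phragCandidates'] at hcand
      have hpW : p ∉ W := hcand.1
      have happ : (ABB.approvers A p).Nonempty := hcand.2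
      -- new loads
      set l' : V → ℝ := fun i => if p ∈ A i then t else l i with hl'
      have hl'ge : ∀ i, l i ≤ l' i := by
        intro i; simp only [hl']; split
        · exact hlt i
        · exact le_refl _
      have hl'0 : ∀ i, 0 ≤ l' i := fun i => (hl0 i).trans (hl'ge i)
      have hl'le : ∀ i, l' i ≤ t := by
        intro i; simp only [hl']; split
        · exact le_refl _
        · exact hlt i
      -- monotonicity of phragLoad
      have hmono : ∀ p', (ABB.approvers A p').Nonempty →
          ABB.phragLoad A c l p' ≤ ABB.phragLoad A c l' p' := by
        intro p' hp'
        unfold ABB.phragLoad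
        have hcardpos := approvers_card_pos hp'
        have hs : ∑ i ∈ ABB.approvers A p', l i ≤ ∑ i ∈ ABB.approvers A p', l' i :=
          Finset.sum_le_sum fun i _ => hl'ge i
        exact (div_le_div_iff_of_pos_right hcardpos).mpr (by linarith)
      refine ⟨hl'0, ?_, ?_⟩
      · -- I3 for new state
        intro p' hp' i
        rw [mem_phragCandidates'] at hp'
        have hp'W : p' ∉ W := fun hh => hp'.1 (Finset.mem_insert_of_mem hh)
        have hp'cand : p' ∈ ABB.phragCandidates A W :=
          mem_phragCandidates'.mpr ⟨hp'W, hp'.2⟩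
        have h1 : t ≤ ABB.phragLoad A c l p' := hmin p' hp'cand
        have h2 : ABB.phragLoad A c l p' ≤ ABB.phragLoad A c l' p' := hmono p' hp'.2
        exact le_trans (hl'le i) (le_trans h1 h2)
      · -- payment function
        refine ⟨fun i w => if w = p then (if p ∈ A i then t - l i else 0) else d i w,
          ?_, ?_, ?_, ?_, ?_⟩
        · intro i w
          dsimp only; split
          · split
            · linarith [hlt i]
            · exact le_refl 0
          · exact hd0 i w
        · intro i w hne
          dsimp only at hne
          by_cases hw : w = p
          · rw [if_pos hw] at hne
            refine ⟨?_, hw ▸ Finset.mem_insert_self p W⟩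
            by_cases hA : p ∈ A i
            · exact hw ▸ hA
            · rw [if_neg hA] at hne; exact absurd rfl hne
          · rw [if_neg hw] at hne
            exact ⟨(hdsupp i w hne).1, Finset.mem_insert_of_mem (hdsupp i w hne).2⟩
        · intro w hw
          by_cases hwp : w = p
          · subst hwp
            have hred : ∑ i, (if w = w then (if w ∈ A i then t - l i else 0) else d i w)
                = ∑ i, (if w ∈ A i then t - l i else 0) :=
              Finset.sum_congr rfl fun i _ => if_pos rfl
            rw [hred]
            have heq : ∑ i, (if w ∈ A i then t - l i else 0)
                = ∑ i ∈ ABB.approvers A w, (t - l i) :=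
              (Finset.sum_filter _ _).symm
            rw [heq, Finset.sum_sub_distrib, Finset.sum_const, nsmul_eq_mul, mul_comm]
            have hmul := phragLoad_mul (A := A) (c := c) (l := l) happ
            rw [← ht] at hmul
            linarith
          · have hwW : w ∈ W := by
              rcases Finset.mem_insert.mp hw with h | h
              · exact absurd h hwp
              · exact h
            calc ∑ i, (if w = p then (if p ∈ A i then t - l i else 0) else d i w)
                = ∑ i, d i w := by
                  apply Finset.sum_congr rfl; intro i _; rw [if_neg hwp]
              _ = c w := hdcol w hwW
        · intro i
          have : (fun w => if w = p then (if p ∈ A i then t - l i else 0) else d i w)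
              = Function.update (d i) p (if p ∈ A i then t - l i else 0) := by
            funext w
            by_cases hw : w = p
            · subst hw; simp
            · simp [Function.update_of_ne hw, hw]
          rw [this, Finset.sum_update_of_mem (Finset.mem_univ p)]
          have hdip : d i p = 0 := by
            by_contra hne
            exact hpW (hdsupp i p hne).2
          have : ∑ w ∈ Finset.univ \ {p}, d i w = l i := by
            have := hdrow i
            rw [← this, ← Finset.sum_sdiff (Finset.singleton_subset_iff.mpr (Finset.mem_univ p))]
            simp [hdip]
          rw [this]
          simp only [hl']
          split
          · ring
          · simp
        · intro p'' hp'' happ'' w hw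
          have hp''W : p'' ∉ W := fun hh => hp'' (Finset.mem_insert_of_mem hh)
          by_cases hwp : w = p
          · subst hwp
            have hp''cand : p'' ∈ ABB.phragCandidates A W :=
              mem_phragCandidates'.mpr ⟨hp''W, happ''⟩
            have hmin'' : t ≤ ABB.phragLoad A c l p'' := hmin p'' hp''cand
            have hmul := phragLoad_mul (A := A) (c := c) (l := l) happ''
            have hcard'' := approvers_card_pos happ''
            have h1 : ∑ i ∈ ABB.approvers A p'', (if w = w then (if w ∈ A i then t - l i else 0) else d i w)
                ≤ ∑ i ∈ ABB.approvers A p'', (t - l i) := by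
              apply Finset.sum_le_sum
              intro i _
              rw [if_pos rfl]
              split
              · exact le_refl _
              · linarith [hlt i]
            have h2 : ∑ i ∈ ABB.approvers A p'', (t - l i)
                = t * ((ABB.approvers A p'').card : ℝ) - ∑ i ∈ ABB.approvers A p'', l i := by
              rw [Finset.sum_sub_distrib, Finset.sum_const, nsmul_eq_mul, mul_comm]
            have h3 : t * ((ABB.approvers A p'').card : ℝ) ≤ c p'' + ∑ i ∈ ABB.approvers A p'', l i := by
              calc t * ((ABB.approvers A p'').card : ℝ)
                  ≤ ABB.phragLoad A c l p'' * ((ABB.approvers A p'').card : ℝ) :=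
                    mul_le_mul_of_nonneg_right hmin'' hcard''.le
                _ = c p'' + ∑ i ∈ ABB.approvers A p'', l i := hmul
            calc ∑ i ∈ ABB.approvers A p'', (if w = w then (if w ∈ A i then t - l i else 0) else d i w)
                ≤ t * ((ABB.approvers A p'').card : ℝ) - ∑ i ∈ ABB.approvers A p'', l i := by
                  rw [← h2]; exact h1
              _ ≤ c p'' := by linarith
          · have hwW : w ∈ W := by
              rcases Finset.mem_insert.mp hw with h | h
              · exact absurd h hwp
              · exact h
            calc ∑ i ∈ ABB.approvers A p'', (if w = p then (if p ∈ A i then t - l i else 0) else d i w)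
                = ∑ i ∈ ABB.approvers A p'', d i w := by
                  apply Finset.sum_congr rfl; intro i _; rw [if_neg hwp]
              _ ≤ c p'' := hC6 p'' hp''W happ'' w hwW

end Aux
end ABB
/-- Every output of sequential Phragmén satisfies PJR-x w.r.t. every
DNS satisfaction function `μ`. -/
theorem statement15 {V P : Type} [Fintype V] [DecidableEq V] [Fintype P] [DecidableEq P]
    (A : V → Finset P) (c : P → ℝ) (b : ℝ)
    (hn : 0 < Fintype.card V) (hc : ∀ p : P, 0 < c p) (hb : 0 < b)
    (W : Finset P) (hW : ABB.PhragOutput A c b W) :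
    ∀ μ : Finset P → ℝ, ABB.IsSatFun μ → ABB.DNS c μ → ABB.PJRx A c b μ W := by
  intro μ hsat hdns N' T hcoh p hp
  classical
  obtain ⟨hN'ne, hTsub, hTcost⟩ := hcoh
  obtain ⟨l, hreach, hterm⟩ := hW
  obtain ⟨hl0, hI3, d, hd0, hdsupp, hdcol, hdrow, hC6⟩ := ABB.phrag_inv hc hreach
  obtain ⟨i0, hi0⟩ := hN'ne
  have hpT : p ∈ T := (Finset.mem_sdiff.mp hp).1
  have hpW : p ∉ W := (Finset.mem_sdiff.mp hp).2
  have happ : (ABB.approvers A p).Nonempty :=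
    ⟨i0, ABB.mem_approvers'.mpr (hTsub i0 hi0 hpT)⟩
  have hpcand : p ∈ ABB.phragCandidates A W :=
    ABB.mem_phragCandidates'.mpr ⟨hpW, happ⟩
  -- termination must be via budget overrun
  rcases hterm with hterm | ⟨q, hqcand, hqmin, hqb⟩
  · exact absurd (hterm ▸ hpcand) (Finset.notMem_empty p)
  set n : ℝ := (Fintype.card V : ℝ) with hn'
  have hnpos : (0:ℝ) < n := by rw [hn']; exact_mod_cast hn
  set t : ℝ := ABB.phragLoad A c l p with htdef
  have hlt : ∀ i, l i ≤ t := hI3 p hpcand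
  have ht0 : 0 ≤ t := (hl0 i0).trans (hlt i0)
  -- Step 1 : total load equals total cost of W
  have hsum : ∑ i, l i = ABB.costOf c W := by
    calc ∑ i, l i = ∑ i, ∑ p', d i p' := Finset.sum_congr rfl fun i _ => (hdrow i).symm
      _ = ∑ p', ∑ i, d i p' := Finset.sum_comm
      _ = ∑ p' ∈ W, ∑ i, d i p' := by
          refine (Finset.sum_subset (Finset.subset_univ W) ?_).symm
          intro p' _ hp'
          exact Finset.sum_eq_zero fun i _ => by
            by_contra h; exact hp' (hdsupp i p' h).2
      _ = ∑ p' ∈ W, c p' := Finset.sum_congr rfl hdcol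
      _ = ABB.costOf c W := rfl
  -- Step 2 : b < n * t
  have hbn : b < n * t := by
    have happq : (ABB.approvers A q).Nonempty := (ABB.mem_phragCandidates'.mp hqcand).2
    have hkpos := ABB.approvers_card_pos happq
    have hqt : ABB.phragLoad A c l q ≤ t := hqmin p hpcand
    have hmulq := ABB.phragLoad_mul (A := A) (c := c) (l := l) happq
    have hsplit : ∑ i ∈ ABB.approvers A q, l i + ∑ i ∈ (ABB.approvers A q)ᶜ, l i = ∑ i, l i :=
      Finset.sum_add_sum_compl _ _
    have hcompl : ∑ i ∈ (ABB.approvers A q)ᶜ, l i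
        ≤ ((ABB.approvers A q)ᶜ.card : ℝ) * t := by
      calc ∑ i ∈ (ABB.approvers A q)ᶜ, l i ≤ ∑ _i ∈ (ABB.approvers A q)ᶜ, t :=
            Finset.sum_le_sum fun i _ => hlt i
        _ = ((ABB.approvers A q)ᶜ.card : ℝ) * t := by rw [Finset.sum_const, nsmul_eq_mul]
    have hcardcompl : ((ABB.approvers A q)ᶜ.card : ℝ) = n - ((ABB.approvers A q).card : ℝ) := by
      rw [Finset.card_compl]
      have hle : (ABB.approvers A q).card ≤ Fintype.card V := Finset.card_le_univ _
      push_cast [Nat.cast_sub hle]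
      ring
    have hcq : c q ≤ t * ((ABB.approvers A q).card : ℝ) - ∑ i ∈ ABB.approvers A q, l i := by
      have : ABB.phragLoad A c l q * ((ABB.approvers A q).card : ℝ)
          ≤ t * ((ABB.approvers A q).card : ℝ) :=
        mul_le_mul_of_nonneg_right hqt hkpos.le
      linarith [hmulq]
    have : ABB.costOf c W + c q ≤ n * t := by
      rw [← hsum]
      nlinarith [hcompl, hcardcompl, hsplit, hcq]
    linarith
  -- Step 3 : t * |N'| ≤ c p + ∑_{i ∈ N'} l i
  have hN'sub : N' ⊆ ABB.approvers A p := fun i hi => ABB.mem_approvers'.mpr (hTsub i hi hpT)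
  have hstar : t * (N'.card : ℝ) ≤ c p + ∑ i ∈ N', l i := by
    have hmulp := ABB.phragLoad_mul (A := A) (c := c) (l := l) happ
    rw [← htdef] at hmulp
    have hsplit : ∑ i ∈ ABB.approvers A p \ N', l i + ∑ i ∈ N', l i
        = ∑ i ∈ ABB.approvers A p, l i := Finset.sum_sdiff hN'sub
    have hdiffle : ∑ i ∈ ABB.approvers A p \ N', l i
        ≤ (((ABB.approvers A p).card : ℝ) - (N'.card : ℝ)) * t := by
      calc ∑ i ∈ ABB.approvers A p \ N', l i ≤ ∑ _i ∈ ABB.approvers A p \ N', t :=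
            Finset.sum_le_sum fun i _ => hlt i
        _ = (((ABB.approvers A p) \ N').card : ℝ) * t := by rw [Finset.sum_const, nsmul_eq_mul]
        _ = (((ABB.approvers A p).card : ℝ) - (N'.card : ℝ)) * t := by
            rw [Finset.card_sdiff_of_subset hN'sub, Nat.cast_sub (Finset.card_le_card hN'sub)]
    linarith
  -- Step 4 : ∑_{i ∈ N'} l i = ∑_{w ∈ S'} D w
  set S' : Finset P := W ∩ N'.biUnion A with hS'def
  set D : P → ℝ := fun w => ∑ i ∈ N', d i w with hDdef
  have hload : ∑ i ∈ N', l i = ∑ w ∈ S', D w := by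
    calc ∑ i ∈ N', l i = ∑ i ∈ N', ∑ p', d i p' := Finset.sum_congr rfl fun i _ => (hdrow i).symm
      _ = ∑ p', ∑ i ∈ N', d i p' := Finset.sum_comm
      _ = ∑ p' ∈ S', D p' := by
          refine (Finset.sum_subset (Finset.subset_univ S') ?_).symm
          intro p' _ hp'
          refine Finset.sum_eq_zero fun i hi => ?_
          by_contra h
          obtain ⟨hAi, hWi⟩ := hdsupp i p' h
          exact hp' (Finset.mem_inter.mpr ⟨hWi, Finset.mem_biUnion.mpr ⟨i, hi, hAi⟩⟩)
  -- Step 5 : main numeric inequality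
  have hN'pos : (0:ℝ) < (N'.card : ℝ) := by
    exact_mod_cast Finset.card_pos.mpr ⟨i0, hi0⟩
  have hnum1 : ABB.costOf c T < c p + ∑ w ∈ S', D w := by
    have h1 : ABB.costOf c T ≤ ((N'.card : ℝ) / n) * b := hTcost
    have h2 : ((N'.card : ℝ) / n) * b < ((N'.card : ℝ) / n) * (n * t) := by
      apply mul_lt_mul_of_pos_left hbn (div_pos hN'pos hnpos)
    have h3 : ((N'.card : ℝ) / n) * (n * t) = t * (N'.card : ℝ) := by
      field_simp
    calc ABB.costOf c T ≤ ((N'.card : ℝ) / n) * b := h1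
      _ < ((N'.card : ℝ) / n) * (n * t) := h2
      _ = t * (N'.card : ℝ) := h3
      _ ≤ c p + ∑ i ∈ N', l i := hstar
      _ = c p + ∑ w ∈ S', D w := by rw [hload]
  -- facts about D
  have hD0 : ∀ w, 0 ≤ D w := fun w => Finset.sum_nonneg fun i _ => hd0 i w
  have hDlec : ∀ w ∈ W, D w ≤ c w := by
    intro w hw
    calc D w ≤ ∑ i, d i w :=
          Finset.sum_le_sum_of_subset_of_nonneg (Finset.subset_univ N') fun i _ _ => hd0 i w
      _ = c w := hdcol w hw
  -- Step 6 : split sums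
  have hTW : T ∩ W ⊆ T := Finset.inter_subset_left
  have hT2S' : T ∩ W ⊆ S' := by
    intro r hr
    obtain ⟨hrT, hrW⟩ := Finset.mem_inter.mp hr
    exact Finset.mem_inter.mpr ⟨hrW, Finset.mem_biUnion.mpr ⟨i0, hi0, hTsub i0 hi0 hrT⟩⟩
  have hTd : T \ (T ∩ W) = T \ W := by
    ext r; simp only [Finset.mem_sdiff, Finset.mem_inter]; tauto
  have hS'd : S' \ (T ∩ W) = S' \ T := by
    ext r
    simp only [Finset.mem_sdiff, Finset.mem_inter, hS'def]
    tauto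
  have hsplitTc : ∑ r ∈ T \ W, c r + ∑ r ∈ T ∩ W, c r = ∑ r ∈ T, c r := by
    rw [← hTd]; exact Finset.sum_sdiff hTW
  have hsplitS'D : ∑ w ∈ S' \ T, D w + ∑ w ∈ T ∩ W, D w = ∑ w ∈ S', D w := by
    rw [← hS'd]; exact Finset.sum_sdiff hT2S'
  have hT2le : ∑ w ∈ T ∩ W, D w ≤ ∑ w ∈ T ∩ W, c w :=
    Finset.sum_le_sum fun w hw => hDlec w (Finset.mem_inter.mp hw).2
  have hpmemTW : p ∈ T \ W := hp
  have heraseT : ∑ r ∈ (T \ W).erase p, c r + c p = ∑ r ∈ T \ W, c r :=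
    Finset.sum_erase_add _ _ hpmemTW
  have hnum2 : ∑ r ∈ (T \ W).erase p, c r < ∑ w ∈ S' \ T, D w := by
    have : ABB.costOf c T = ∑ r ∈ T, c r := rfl
    linarith [hnum1, hsplitTc, hsplitS'D, hT2le, heraseT]
  -- Step 7 : the max-ratio project q0
  obtain ⟨q0, hq0mem, hq0max⟩ :=
    Finset.exists_max_image (T \ W) (fun r => μ {r} / c r) ⟨p, hpmemTW⟩
  have hq0T : q0 ∈ T := (Finset.mem_sdiff.mp hq0mem).1
  have hq0W : q0 ∉ W := (Finset.mem_sdiff.mp hq0mem).2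
  have happ0 : (ABB.approvers A q0).Nonempty :=
    ⟨i0, ABB.mem_approvers'.mpr (hTsub i0 hi0 hq0T)⟩
  set ρ : ℝ := μ {q0} / c q0 with hρdef
  have hμq0pos : 0 < μ {q0} := by
    rcases (hsat.2.2 {q0}).lt_or_eq with h | h
    · exact h
    · exact absurd ((hsat.2.1 {q0}).mp h.symm) (Finset.singleton_ne_empty q0)
  have hρpos : 0 < ρ := div_pos hμq0pos (hc q0)
  -- D w ≤ c q0 for w ∈ W
  have hDq0 : ∀ w ∈ W, D w ≤ c q0 := by
    intro w hw
    calc D w ≤ ∑ i ∈ ABB.approvers A q0, d i w := by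
          refine Finset.sum_le_sum_of_subset_of_nonneg ?_ fun i _ _ => hd0 i w
          exact fun i hi => ABB.mem_approvers'.mpr (hTsub i hi hq0T)
      _ ≤ c q0 := hC6 q0 hq0W happ0 w hw
  -- Step 8 : ρ * D w ≤ μ {w} for w ∈ S' \ T
  have hμD : ∀ w ∈ S' \ T, ρ * D w ≤ μ {w} := by
    intro w hw
    have hwW : w ∈ W := (Finset.mem_inter.mp (Finset.mem_sdiff.mp hw).1).1
    rcases le_total (c w) (c q0) with h | h
    · have hr := (hdns.2 w q0 h).2
      calc ρ * D w ≤ ρ * c w := mul_le_mul_of_nonneg_left (hDlec w hwW) hρpos.le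
        _ ≤ (μ {w} / c w) * c w := mul_le_mul_of_nonneg_right hr (hc w).le
        _ = μ {w} := div_mul_cancel₀ _ (ne_of_gt (hc w))
    · have hr := (hdns.2 q0 w h).1
      calc ρ * D w ≤ ρ * c q0 := mul_le_mul_of_nonneg_left (hDq0 w hwW) hρpos.le
        _ = μ {q0} := div_mul_cancel₀ _ (ne_of_gt (hc q0))
        _ ≤ μ {w} := hr
  -- Step 9 : conclude
  by_contra hcon
  push_neg at hcon
  have hadd := hdns.1
  have hpS' : p ∉ S' := fun h => hpW (Finset.mem_inter.mp h).1
  have hμT : μ T = ∑ r ∈ T, μ {r} := hadd T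
  have hμins : μ (insert p S') = μ {p} + ∑ w ∈ S', μ {w} := by
    rw [hadd (insert p S'), Finset.sum_insert hpS']
  have hsplitTμ : ∑ r ∈ T \ W, μ {r} + ∑ r ∈ T ∩ W, μ {r} = ∑ r ∈ T, μ {r} := by
    rw [← hTd]; exact Finset.sum_sdiff hTW
  have hsplitS'μ : ∑ w ∈ S' \ T, μ {w} + ∑ w ∈ T ∩ W, μ {w} = ∑ w ∈ S', μ {w} := by
    rw [← hS'd]; exact Finset.sum_sdiff hT2S'
  have heraseμ : ∑ r ∈ (T \ W).erase p, μ {r} + μ {p} = ∑ r ∈ T \ W, μ {r} :=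
    Finset.sum_erase_add _ _ hpmemTW
  have hkey : ∑ w ∈ S' \ T, μ {w} ≤ ∑ r ∈ (T \ W).erase p, μ {r} := by
    have := hcon
    rw [hμT, hμins] at this
    linarith [hsplitTμ, hsplitS'μ, heraseμ]
  have hchain1 : ∑ r ∈ (T \ W).erase p, μ {r} ≤ ρ * ∑ r ∈ (T \ W).erase p, c r := by
    rw [Finset.mul_sum]
    refine Finset.sum_le_sum fun r hr => ?_
    have hrmem : r ∈ T \ W := Finset.mem_of_mem_erase hr
    have hratio : μ {r} / c r ≤ ρ := hq0max r hrmem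
    calc μ {r} = (μ {r} / c r) * c r := (div_mul_cancel₀ _ (ne_of_gt (hc r))).symm
      _ ≤ ρ * c r := mul_le_mul_of_nonneg_right hratio (hc r).le
  have hchain2 : ρ * ∑ r ∈ (T \ W).erase p, c r < ρ * ∑ w ∈ S' \ T, D w :=
    mul_lt_mul_of_pos_left hnum2 hρpos
  have hchain3 : ρ * ∑ w ∈ S' \ T, D w ≤ ∑ w ∈ S' \ T, μ {w} := by
    rw [Finset.mul_sum]
    exact Finset.sum_le_sum fun w hw => hμD w hw
  linarith
end

section
/- Let s : ℝ_{>0} → ℝ_{>0} be a function that violates DNS, i.e., there exist values 0 < x ≤ x' such that s(x) > s(x') or s(x)/x < s(x')/x'. Then there exists an ABB instance (A, P, c, b) and an output W of MES[μ^#] on this instance such that W violates PJR-x with respect to the additive satisfaction function μ defined by μ(p) = s(c(p)) for each p ∈ P. -/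
open Finset

namespace S16

open ABB

variable (g n J t : ℕ) (γ τ : ℝ)

def AA (g n J t : ℕ) : Fin n → Finset (Fin (J + t)) :=
  fun i => Finset.univ.filter (fun p => (p : ℕ) < J ∨ (i : ℕ) < g)

noncomputable def cb (J t : ℕ) (γ τ : ℝ) : Fin (J + t) → ℝ :=
  fun p => if (p : ℕ) < J then γ else τ

def Wset (J t j : ℕ) : Finset (Fin (J + t)) :=
  Finset.univ.filter (fun p => (p : ℕ) < j)

lemma card_filter_lt (m j : ℕ) (h : j ≤ m) :
    (Finset.univ.filter (fun p : Fin m => (p : ℕ) < j)).card = j := by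
  rcases eq_or_lt_of_le h with rfl | h
  · rw [Finset.filter_true_of_mem (fun p _ => p.isLt)]
    simp
  · have : (Finset.univ.filter (fun p : Fin m => (p : ℕ) < j)) = Finset.Iio ⟨j, h⟩ := by
      ext p; simp [Fin.lt_def]
    rw [this, Fin.card_Iio]

lemma card_filter_not_lt (m j : ℕ) (h : j < m) :
    (Finset.univ.filter (fun p : Fin m => ¬ (p : ℕ) < j)).card = m - j := by
  have : (Finset.univ.filter (fun p : Fin m => ¬ (p : ℕ) < j)) = Finset.Ici ⟨j, h⟩ := by
    ext p; simp [Fin.le_def]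
  rw [this, Fin.card_Ici]

lemma approvers_lo (hg : 0 < g) (p : Fin (J + t)) (hp : (p : ℕ) < J) :
    approvers (AA g n J t) p = Finset.univ := by
  ext i; simp [approvers, AA, hp]

lemma approvers_hi (p : Fin (J + t)) (hp : ¬ (p : ℕ) < J) :
    approvers (AA g n J t) p = Finset.univ.filter (fun i : Fin n => (i : ℕ) < g) := by
  ext i; simp [approvers, AA, hp]

end S16

namespace S16x
open ABB S16

theorem reach (g n J t : ℕ) (γ τ β : ℝ) (hg : 0 < g) (hgn : g ≤ n) (ht : 0 < t)
    (hγ : 0 < γ) (hτ : 0 < τ)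
    (H2 : (g:ℝ) * γ ≤ (n:ℝ) * τ)
    (H3 : (J:ℝ) * γ ≤ (n:ℝ) * β) :
    ∀ j, j ≤ J → MESReach (AA g n J t) (cb J t γ τ) (fun S => (S.card : ℝ)) β
      (Wset J t j) (fun _ => β - j * γ / n) := by
  have hn : 0 < n := lt_of_lt_of_le hg hgn
  have hnR : (0:ℝ) < n := by exact_mod_cast hn
  intro j hj
  induction j with
  | zero =>
      have h1 : Wset J t 0 = ∅ := by ext p; simp [Wset]
      have h2 : (fun _ : Fin n => β - (0:ℕ) * γ / n) = fun _ => β := by funext i; simp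
      rw [h1, h2]; exact MESReach.init
  | succ j ih =>
      have hjJ : j < J := hj
      have hjm : j < J + t := by omega
      set p : Fin (J + t) := ⟨j, hjm⟩ with hp
      have hpval : (p : ℕ) = j := rfl
      have hpJ : (p : ℕ) < J := hjJ
      -- budget bound
      have hcast : ((j:ℝ) + 1) ≤ (J:ℝ) := by exact_mod_cast hj
      have h1 : ((j:ℝ) + 1) * γ ≤ (n:ℝ) * β := le_trans (by nlinarith) H3
      have key : γ / n ≤ β - (j:ℝ) * γ / n := by
        have h2 : (j:ℝ) * γ / n + γ / n ≤ β := by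
          rw [← add_div, div_le_iff₀ hnR]; nlinarith
        linarith
      have hone : ((({p} : Finset (Fin (J+t))).card : ℝ)) = 1 := by simp
      have hnotin : p ∉ Wset J t j := by simp [Wset]; omega
      have aff : Affordable (AA g n J t) (cb J t γ τ) (fun S => (S.card : ℝ))
          (fun _ => β - j * γ / n) p (γ / n) := by
        unfold Affordable
        rw [approvers_lo g n J t hg p hpJ]
        have hc : ∀ i ∈ (Finset.univ : Finset (Fin n)),
            min ((fun _ : Fin n => β - j * γ / n) i)
              (γ / n * ((({p} : Finset (Fin (J+t))).card : ℝ))) = γ / n := by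
          intro i _
          rw [hone, mul_one]
          exact min_eq_right key
        rw [Finset.sum_congr rfl hc, Finset.sum_const, Finset.card_univ, Fintype.card_fin,
          nsmul_eq_mul]
        have : cb J t γ τ p = γ := by simp [cb, hpJ]
        rw [this]
        field_simp
      have minρ : ∀ p' ∉ Wset J t j, ∀ ρ' : ℝ, 0 ≤ ρ' →
          Affordable (AA g n J t) (cb J t γ τ) (fun S => (S.card : ℝ))
            (fun _ => β - j * γ / n) p' ρ' → γ / n ≤ ρ' := by
        intro p' _ ρ' hρ' haff
        unfold Affordable at haff
        have hone' : ((({p'} : Finset (Fin (J+t))).card : ℝ)) = 1 := by simp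
        have hb : ∀ i ∈ approvers (AA g n J t) p',
            min ((fun _ : Fin n => β - j * γ / n) i)
              (ρ' * ((({p'} : Finset (Fin (J+t))).card : ℝ))) ≤ ρ' := by
          intro i _
          rw [hone', mul_one]
          exact min_le_right _ _
        by_cases hcase : (p' : ℕ) < J
        · rw [approvers_lo g n J t hg p' hcase] at haff hb
          have hle : cb J t γ τ p' ≤ (Finset.univ : Finset (Fin n)).card • ρ' := by
            rw [← haff]; exact Finset.sum_le_card_nsmul _ _ _ hb
          rw [Finset.card_univ, Fintype.card_fin, nsmul_eq_mul] at hle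
          have : cb J t γ τ p' = γ := by simp [cb, hcase]
          rw [this] at hle
          rw [div_le_iff₀ hnR]; linarith
        · rw [approvers_hi g n J t p' hcase] at haff hb
          have hle : cb J t γ τ p' ≤
              (Finset.univ.filter (fun i : Fin n => (i : ℕ) < g)).card • ρ' := by
            rw [← haff]; exact Finset.sum_le_card_nsmul _ _ _ hb
          rw [card_filter_lt n g hgn, nsmul_eq_mul] at hle
          have : cb J t γ τ p' = τ := by simp [cb, hcase]
          rw [this] at hle
          have hgR : (0:ℝ) < g := by exact_mod_cast hg
          rw [div_le_iff₀ hnR]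
          have h5 : τ ≤ g * ρ' := hle
          nlinarith
      have step := MESReach.step (ih (le_of_lt hjJ)) hnotin (by positivity) aff minρ
      have hW : insert p (Wset J t j) = Wset J t (j+1) := by
        ext q
        simp [Wset, Fin.ext_iff]
        omega
      have hbud : (fun i : Fin n => if p ∈ AA g n J t i then
            (fun _ : Fin n => β - j * γ / n) i -
              min ((fun _ : Fin n => β - j * γ / n) i)
                (γ / n * ((({p} : Finset (Fin (J+t))).card : ℝ)))
          else (fun _ : Fin n => β - j * γ / n) i)
          = fun _ : Fin n => β - (j+1 : ℕ) * γ / n := by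
        funext i
        have hpA : p ∈ AA g n J t i := by
          simp [AA]
          left; exact hpJ
        rw [if_pos hpA]
        simp only [hone, mul_one]
        rw [min_eq_right key]
        push_cast
        ring
      rw [hW, hbud] at step
      exact step

end S16x

namespace S16y
open ABB S16

theorem main (g n J t : ℕ) (γ τ β : ℝ) (s : ℝ → ℝ)
    (hg : 0 < g) (hgn : g ≤ n) (ht : 0 < t)
    (hγ : 0 < γ) (hτ : 0 < τ) (hβ : 0 < β)
    (hsτ : 0 < s τ)
    (H2 : (g:ℝ) * γ ≤ (n:ℝ) * τ)
    (H3 : (J:ℝ) * γ ≤ (n:ℝ) * β)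
    (H4 : (g:ℝ) * (β - (J:ℝ) * γ / (n:ℝ)) < τ)
    (H5 : (t:ℝ) * τ ≤ (g:ℝ) * β)
    (H6 : (J:ℝ) * s γ ≤ ((t:ℝ) - 1) * s τ) :
    ∃ (n' m : ℕ) (A : Fin n' → Finset (Fin m)) (c : Fin m → ℝ) (b : ℝ)
      (W : Finset (Fin m)),
      (∀ p : Fin m, 0 < c p) ∧ 0 < b ∧ 0 < n' ∧
      MESOutput A c b (fun S => (S.card : ℝ)) W ∧
      ¬ PJRx A c b (fun S => ∑ p ∈ S, s (c p)) W := by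
  have hn : 0 < n := lt_of_lt_of_le hg hgn
  have hnR : (0:ℝ) < n := by exact_mod_cast hn
  have hJm : J < J + t := by omega
  refine ⟨n, J + t, AA g n J t, cb J t γ τ, n * β, Wset J t J, ?_, ?_, hn, ?_, ?_⟩
  · intro p; by_cases h : (p:ℕ) < J <;> simp [cb, h, hγ, hτ]
  · positivity
  · -- MESOutput
    refine ⟨fun _ => β - J * γ / n, ?_, ?_⟩
    · have hb : ((n:ℝ) * β) / ((Fintype.card (Fin n)):ℝ) = β := by
        rw [Fintype.card_fin]; field_simp
      rw [hb]
      exact S16x.reach g n J t γ τ β hg hgn ht hγ hτ H2 H3 J le_rfl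
    · intro p hp ρ hρ haff
      have hpJ : ¬ (p:ℕ) < J := by simpa [Wset] using hp
      unfold Affordable at haff
      rw [approvers_hi g n J t p hpJ] at haff
      have hb2 : ∀ i ∈ Finset.univ.filter (fun i : Fin n => (i:ℕ) < g),
          min ((fun _ : Fin n => β - J * γ / n) i)
            (ρ * ((({p} : Finset (Fin (J+t))).card : ℝ)))
          ≤ β - J * γ / n := fun i _ => min_le_left _ _
      have hle := Finset.sum_le_card_nsmul _ _ _ hb2
      rw [card_filter_lt n g hgn, nsmul_eq_mul, haff] at hle
      have hcp : cb J t γ τ p = τ := by simp [cb, hpJ]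
      rw [hcp] at hle
      linarith
  · -- ¬ PJRx
    intro hPJ
    set N' : Finset (Fin n) := Finset.univ.filter (fun i => (i:ℕ) < g) with hN'
    set T : Finset (Fin (J+t)) := Finset.univ.filter (fun p => ¬ (p:ℕ) < J) with hT
    set p0 : Fin (J+t) := ⟨J, hJm⟩ with hp0
    have hcardT : T.card = t := by rw [hT, card_filter_not_lt (J+t) J hJm]; omega
    have hcoh : Cohesive (AA g n J t) (cb J t γ τ) ((n:ℝ)*β) N' T := by
      refine ⟨⟨⟨0, hn⟩, by simp [hN', hg]⟩, ?_, ?_⟩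
      · intro i hi q _
        simp only [hN', Finset.mem_filter, Finset.mem_univ, true_and] at hi
        simp only [AA, Finset.mem_filter, Finset.mem_univ, true_and]
        right; exact hi
      · have hsum : costOf (cb J t γ τ) T = t * τ := by
          unfold costOf
          have hc : ∀ q ∈ T, cb J t γ τ q = τ := by
            intro q hq
            simp only [hT, Finset.mem_filter, Finset.mem_univ, true_and] at hq
            simp [cb, hq]
          rw [Finset.sum_congr rfl hc, Finset.sum_const, hcardT, nsmul_eq_mul]
        have hcardN : N'.card = g := by rw [hN', card_filter_lt n g hgn]
        rw [hsum, hcardN, Fintype.card_fin]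
        have heq : ((g:ℝ)/(n:ℝ)) * ((n:ℝ)*β) = (g:ℝ) * β := by field_simp
        rw [heq]
        exact H5
    have hmem : p0 ∈ T \ Wset J t J := by simp [hT, Wset, hp0]
    have hlt := hPJ N' T hcoh p0 hmem
    have hWT : Wset J t J ∩ N'.biUnion (AA g n J t) = Wset J t J := by
      apply Finset.inter_eq_left.mpr
      intro q hq
      rw [Finset.mem_biUnion]
      refine ⟨⟨0, hn⟩, by simp [hN', hg], ?_⟩
      simp only [AA, Finset.mem_filter, Finset.mem_univ, true_and]
      left
      simpa [Wset] using hq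
    rw [hWT] at hlt
    have hp0W : p0 ∉ Wset J t J := by simp [Wset, hp0]
    have hμT : ∑ q ∈ T, s (cb J t γ τ q) = (t:ℝ) * s τ := by
      have hc : ∀ q ∈ T, s (cb J t γ τ q) = s τ := by
        intro q hq
        simp only [hT, Finset.mem_filter, Finset.mem_univ, true_and] at hq
        simp [cb, hq]
      rw [Finset.sum_congr rfl hc, Finset.sum_const, hcardT, nsmul_eq_mul]
    have hμins : ∑ q ∈ insert p0 (Wset J t J), s (cb J t γ τ q)
        = s τ + (J:ℝ) * s γ := by
      rw [Finset.sum_insert hp0W]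
      have hc0 : cb J t γ τ p0 = τ := by simp [cb, hp0]
      have hc : ∀ q ∈ Wset J t J, s (cb J t γ τ q) = s γ := by
        intro q hq
        simp only [Wset, Finset.mem_filter, Finset.mem_univ, true_and] at hq
        simp [cb, hq]
      have hcW : (Wset J t J).card = J := by
        unfold Wset; rw [card_filter_lt (J+t) J (by omega)]
      rw [hc0, Finset.sum_congr rfl hc, Finset.sum_const, hcW, nsmul_eq_mul]
    have hlt2 : (t:ℝ) * s τ < s τ + (J:ℝ) * s γ := by
      rw [← hμT, ← hμins]; exact hlt
    linarith

end S16y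


/-- If `s : ℝ_{>0} → ℝ_{>0}` violates DNS, then there exists an ABB
instance and an output `W` of MES[μ^#] on it such that `W` violates PJR-x w.r.t. the
additive satisfaction function induced by `p ↦ s (c p)`. -/
theorem statement16 (s : ℝ → ℝ) (hs : ∀ x : ℝ, 0 < x → 0 < s x)
    (hviol : ∃ x x' : ℝ, 0 < x ∧ x ≤ x' ∧ (s x' < s x ∨ s x / x < s x' / x')) :
    ∃ (n m : ℕ) (A : Fin n → Finset (Fin m)) (c : Fin m → ℝ) (b : ℝ)
      (W : Finset (Fin m)),
      (∀ p : Fin m, 0 < c p) ∧ 0 < b ∧ 0 < n ∧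
      ABB.MESOutput A c b (fun S => (S.card : ℝ)) W ∧
      ¬ ABB.PJRx A c b (fun S => ∑ p ∈ S, s (c p)) W := by
  obtain ⟨x, x', hx, hxx', hcase⟩ := hviol
  have hx' : 0 < x' := lt_of_lt_of_le hx hxx'
  have hsx : 0 < s x := hs x hx
  have hsx' : 0 < s x' := hs x' hx'
  rcases hcase with h | h
  · -- Case A: s x' < s x (so x < x')
    have hxlt : x < x' := by
      rcases eq_or_lt_of_le hxx' with rfl | h2
      · exact absurd h (lt_irrefl _)
      · exact h2
    have huu : 0 < s x - s x' := by linarith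
    obtain ⟨t, htpos, ht2, htu⟩ :
        ∃ t : ℕ, 0 < t ∧ (2:ℝ) ≤ (t:ℝ) ∧ (t:ℝ) * s x' ≤ ((t:ℝ) - 1) * s x := by
      refine ⟨⌈s x / (s x - s x')⌉₊ + 1, by omega, ?_, ?_⟩
      · have h1 : 1 ≤ ⌈s x / (s x - s x')⌉₊ := Nat.one_le_ceil_iff.mpr (by positivity)
        push_cast
        have : (1:ℝ) ≤ (⌈s x / (s x - s x')⌉₊ : ℝ) := by exact_mod_cast h1
        linarith
      · have hc : s x / (s x - s x') ≤ (⌈s x / (s x - s x')⌉₊ : ℝ) := Nat.le_ceil _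
        rw [div_le_iff₀ huu] at hc
        push_cast
        nlinarith [hsx'.le]
    have htR : (0:ℝ) < (t:ℝ) := by exact_mod_cast htpos
    obtain ⟨n, htn, hngex, hnltx⟩ :
        ∃ n : ℕ, t < n ∧ (t:ℝ) * x' ≤ (n:ℝ) * x ∧ (n:ℝ) * x < (t:ℝ) * x' + x := by
      refine ⟨⌈(t:ℝ) * x' / x⌉₊, ?_, ?_, ?_⟩
      · have h1 : (t:ℝ) * x' / x ≤ (⌈(t:ℝ) * x' / x⌉₊ : ℝ) := Nat.le_ceil _
        rw [div_le_iff₀ hx] at h1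
        have h2 : (t:ℝ) < (⌈(t:ℝ) * x' / x⌉₊ : ℝ) := by nlinarith
        exact_mod_cast h2
      · have h1 : (t:ℝ) * x' / x ≤ (⌈(t:ℝ) * x' / x⌉₊ : ℝ) := Nat.le_ceil _
        rw [div_le_iff₀ hx] at h1
        linarith
      · have h1 : (⌈(t:ℝ) * x' / x⌉₊ : ℝ) < (t:ℝ) * x' / x + 1 :=
          Nat.ceil_lt_add_one (by positivity)
        have := mul_lt_mul_of_pos_right h1 hx
        rw [add_mul, div_mul_cancel₀ _ (ne_of_gt hx), one_mul] at this
        exact this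
    have hn0 : 0 < n := lt_trans htpos htn
    have hnR : (0:ℝ) < n := by exact_mod_cast hn0
    have hpaypos : (0:ℝ) < (t:ℝ) * x' / n := by positivity
    have hpayx : (t:ℝ) * x' / n ≤ x := by rw [div_le_iff₀ hnR]; nlinarith
    obtain ⟨J, hJ1, hJlow, hJhi, hJt⟩ :
        ∃ J : ℕ, 0 < J ∧ ((t:ℝ) - 1) * x < (J:ℝ) * ((t:ℝ) * x' / n) ∧
          (J:ℝ) * ((t:ℝ) * x' / n) ≤ (t:ℝ) * x ∧ J ≤ t := by
      set pay : ℝ := (t:ℝ) * x' / n with hpaydef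
      have hargpos : 0 ≤ ((t:ℝ) - 1) * x / pay :=
        div_nonneg (mul_nonneg (by linarith) hx.le) hpaypos.le
      refine ⟨⌊((t:ℝ) - 1) * x / pay⌋₊ + 1, by omega, ?_, ?_, ?_⟩
      · have h1 : ((t:ℝ) - 1) * x / pay < (⌊((t:ℝ) - 1) * x / pay⌋₊ : ℝ) + 1 :=
          Nat.lt_floor_add_one _
        have h2 := mul_lt_mul_of_pos_right h1 hpaypos
        rw [div_mul_cancel₀ _ (ne_of_gt hpaypos)] at h2
        push_cast
        linarith
      · have h1 : (⌊((t:ℝ) - 1) * x / pay⌋₊ : ℝ) ≤ ((t:ℝ) - 1) * x / pay :=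
          Nat.floor_le hargpos
        have h2 := mul_le_mul_of_nonneg_right h1 hpaypos.le
        rw [div_mul_cancel₀ _ (ne_of_gt hpaypos)] at h2
        push_cast
        nlinarith
      · -- J ≤ t
        have harg : ((t:ℝ) - 1) * x / pay < (t:ℝ) := by
          rw [div_lt_iff₀ hpaypos, hpaydef]
          have hkey : ((t:ℝ) - 1) * x * n < (t:ℝ) * ((t:ℝ) * x') := by
            have h2 : ((t:ℝ) - 1) * x < (t:ℝ) * x' := by nlinarith
            nlinarith [hnltx, ht2]
          rw [← mul_div_assoc, lt_div_iff₀ hnR]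
          exact hkey
        have h2 : ⌊((t:ℝ) - 1) * x / pay⌋₊ < t := by
          rw [Nat.floor_lt hargpos]
          exact harg
        omega
    have hJR : (0:ℝ) < (J:ℝ) := by exact_mod_cast hJ1
    have H3 : (J:ℝ) * x' ≤ (n:ℝ) * x := by
      have h1 : (J:ℝ) * ((t:ℝ) * x') ≤ (t:ℝ) * x * n := by
        have h0 : (J:ℝ) * ((t:ℝ) * x') / n ≤ (t:ℝ) * x := by
          rw [mul_div_assoc]; exact hJhi
        rw [div_le_iff₀ hnR] at h0
        exact h0
      by_contra hc
      push_neg at hc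
      have h2 := mul_lt_mul_of_pos_left hc htR
      linarith [h1, h2]
    have H4 : (t:ℝ) * (x - (J:ℝ) * x' / n) < x := by
      have he : (t:ℝ) * (x - (J:ℝ) * x' / n)
          = (t:ℝ) * x - (J:ℝ) * ((t:ℝ) * x' / n) := by ring
      rw [he]
      linarith [hJlow]
    have H6 : (J:ℝ) * s x' ≤ ((t:ℝ) - 1) * s x := by
      have hJtR : (J:ℝ) ≤ (t:ℝ) := by exact_mod_cast hJt
      calc (J:ℝ) * s x' ≤ (t:ℝ) * s x' :=
            mul_le_mul_of_nonneg_right hJtR hsx'.le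
        _ ≤ ((t:ℝ) - 1) * s x := htu
    exact S16y.main t n J t x' x x s htpos (le_of_lt htn) htpos hx' hx hx hsx
      hngex H3 H4 (le_refl _) H6
  · -- Case B: s x / x < s x' / x'
    have hδ : 0 < s x' - x' * s x / x := by
      have h1 : s x * x' < s x' * x := (div_lt_div_iff₀ hx hx').mp h
      have h2 : x' * s x / x < s x' := by
        rw [div_lt_iff₀ hx]; nlinarith
      linarith
    obtain ⟨t, htpos, htδ⟩ :
        ∃ t : ℕ, 0 < t ∧ s x' + s x ≤ ((t:ℝ) - 1) * (s x' - x' * s x / x) := by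
      refine ⟨⌈(s x' + s x) / (s x' - x' * s x / x)⌉₊ + 1, by omega, ?_⟩
      have hc : (s x' + s x) / (s x' - x' * s x / x) ≤
          (⌈(s x' + s x) / (s x' - x' * s x / x)⌉₊ : ℝ) := Nat.le_ceil _
      rw [div_le_iff₀ hδ] at hc
      push_cast
      nlinarith
    have htR : (0:ℝ) < (t:ℝ) := by exact_mod_cast htpos
    obtain ⟨J, hJ1, hJgex, hJlt⟩ :
        ∃ J : ℕ, 0 < J ∧ (t:ℝ) * x' ≤ (J:ℝ) * x ∧ (J:ℝ) < (t:ℝ) * x' / x + 1 := by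
      refine ⟨⌈(t:ℝ) * x' / x⌉₊, ?_, ?_, Nat.ceil_lt_add_one (by positivity)⟩
      · exact Nat.one_le_ceil_iff.mpr (by positivity)
      · have h1 : (t:ℝ) * x' / x ≤ (⌈(t:ℝ) * x' / x⌉₊ : ℝ) := Nat.le_ceil _
        rw [div_le_iff₀ hx] at h1
        linarith
    have hJR : (0:ℝ) < (J:ℝ) := by exact_mod_cast hJ1
    have hβ : (0:ℝ) < (J:ℝ) * x := by positivity
    have H2 : ((1:ℕ):ℝ) * x ≤ ((1:ℕ):ℝ) * x' := by push_cast; linarith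
    have H3 : (J:ℝ) * x ≤ ((1:ℕ):ℝ) * ((J:ℝ) * x) := by push_cast; linarith
    have H4 : ((1:ℕ):ℝ) * ((J:ℝ) * x - (J:ℝ) * x / ((1:ℕ):ℝ)) < x' := by
      push_cast
      rw [div_one]
      simpa using hx'
    have H5 : (t:ℝ) * x' ≤ ((1:ℕ):ℝ) * ((J:ℝ) * x) := by push_cast; linarith
    have H6 : (J:ℝ) * s x ≤ ((t:ℝ) - 1) * s x' := by
      have h1 : (J:ℝ) * s x < ((t:ℝ) * x' / x + 1) * s x :=
        mul_lt_mul_of_pos_right hJlt hsx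
      have h2 : ((t:ℝ) * x' / x + 1) * s x = (t:ℝ) * (x' * s x / x) + s x := by
        field_simp
      nlinarith
    exact S16y.main 1 1 J t x x' ((J:ℝ) * x) s (by norm_num) (by norm_num) htpos
      hx hx' hβ hsx' H2 H3 H4 H5 H6
end

section
/- Let μ be an additive satisfaction function on an ABB instance. Then every output of the Method of Equal Shares MES[μ] satisfies μ-EJR-1⁺. -/
open Finset

/-- Budgets remain nonnegative along any MES run. -/
lemma mes_bud_nonneg {V P : Type} [Fintype V] [DecidableEq V] [Fintype P] [DecidableEq P]
    {A : V → Finset P} {c : P → ℝ} {μ : Finset P → ℝ} {b0 : ℝ} (hb0 : 0 ≤ b0)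
    {Wt : Finset P} {bud : V → ℝ} (h : ABB.MESReach A c μ b0 Wt bud) : ∀ i, 0 ≤ bud i := by
  induction h with
  | init => intro i; exact hb0
  | @step W0 bud0 p ρ h hp hρ haff hmin ih =>
    intro i
    dsimp only
    split
    · have := min_le_left (bud0 i) (ρ * μ {p})
      linarith [ih i]
    · exact ih i

/-- For an additive satisfaction function `μ`, every output of MES[μ]
satisfies `μ`-EJR-1⁺. -/
theorem statement17 {V P : Type} [Fintype V] [DecidableEq V] [Fintype P] [DecidableEq P]
    (A : V → Finset P) (c : P → ℝ) (b : ℝ)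
    (hn : 0 < Fintype.card V) (hc : ∀ p : P, 0 < c p) (hb : 0 < b)
    (μ : Finset P → ℝ) (hμ : ABB.IsSatFun μ) (hadd : ABB.Additive μ)
    (W : Finset P) (hW : ABB.MESOutput A c b μ W) :
    ABB.EJR1plus A c b μ W := by
  classical
  obtain ⟨bud, hreach, hnoaff⟩ := hW
  intro N' T hcoh
  obtain ⟨hne, hsubT, hcost⟩ := hcoh
  by_contra hgoal
  push_neg at hgoal
  obtain ⟨hTW, H⟩ := hgoal
  obtain ⟨hmono, hzero, hnonneg⟩ := hμ
  have hnpos : (0:ℝ) < (Fintype.card V : ℝ) := by exact_mod_cast hn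
  set b0 : ℝ := b / (Fintype.card V : ℝ) with hb0_def
  have hb0 : 0 < b0 := div_pos hb hnpos
  set ν : P → ℝ := fun q => μ {q} with hν_def
  have hνpos : ∀ q, 0 < ν q := by
    intro q
    rcases lt_or_eq_of_le (hnonneg {q}) with h | h
    · exact h
    · exact absurd ((hzero {q}).1 h.symm) (Finset.singleton_ne_empty q)
  have hn' : (0:ℝ) < (N'.card : ℝ) := by exact_mod_cast Finset.card_pos.2 hne
  set n' : ℝ := (N'.card : ℝ) with hn'_def
  have hμsum : ∀ S : Finset P, μ S = ∑ q ∈ S, ν q := hadd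
  have hSne : (T \ W).Nonempty := by
    rw [Finset.sdiff_nonempty]; exact hTW
  obtain ⟨p₁, hp₁S, hp₁min⟩ := Finset.exists_min_image (T \ W) (fun q => c q / ν q) hSne
  obtain ⟨pstar, hpstarS, hpstarmax⟩ := Finset.exists_max_image (T \ W) ν hSne
  have hp₁T : p₁ ∈ T := (Finset.mem_sdiff.1 hp₁S).1
  have hp₁W : p₁ ∉ W := (Finset.mem_sdiff.1 hp₁S).2
  set ρs : ℝ := c p₁ / (n' * ν p₁) with hρs_def
  have hρs_pos : 0 < ρs := div_pos (hc p₁) (mul_pos hn' (hνpos p₁))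
  have hρsν : n' * (ρs * ν p₁) = c p₁ := by
    rw [hρs_def]
    field_simp [hn'.ne', (hνpos p₁).ne']
  -- negated conclusion, in additive form
  have H' : ∀ i ∈ N', ∀ p ∈ T \ W, μ (A i ∩ W) + ν p ≤ μ T := by
    intro i hi p hp
    have hpW : p ∉ W := (Finset.mem_sdiff.1 hp).2
    have hpA : p ∈ A i := hsubT i hi (Finset.mem_sdiff.1 hp).1
    have hset : A i ∩ insert p W = insert p (A i ∩ W) := by
      ext q
      simp only [Finset.mem_inter, Finset.mem_insert]
      constructor
      · rintro ⟨hq, hq' | hq'⟩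
        · exact Or.inl hq'
        · exact Or.inr ⟨hq, hq'⟩
      · rintro (rfl | ⟨hq, hq'⟩)
        · exact ⟨hpA, Or.inl rfl⟩
        · exact ⟨hq, Or.inr hq'⟩
    have hkey := H i hi p hp
    have hpnotin : p ∉ A i ∩ W := by simp [Finset.mem_inter, hpW]
    rw [hset, hμsum (insert p (A i ∩ W)), Finset.sum_insert hpnotin,
      ← hμsum (A i ∩ W)] at hkey
    linarith
  -- minimal cost/satisfaction ratio
  have hρsq : ∀ q ∈ T \ W, n' * (ρs * ν q) ≤ c q := by
    intro q hq
    have h1 := hp₁min q hq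
    rw [div_le_div_iff₀ (hνpos p₁) (hνpos q)] at h1
    have h2 : n' * (ρs * ν q) = c p₁ * ν q / ν p₁ := by
      rw [hρs_def]
      field_simp [hn'.ne', (hνpos p₁).ne']
    rw [h2, div_le_iff₀ (hνpos p₁)]
    exact h1
  -- the central arithmetic estimate
  have harith : ∀ i ∈ N', ∀ Wt : Finset P, Wt ⊆ W →
      (c p₁ + ∑ q ∈ (T ∩ W) \ Wt, c q) / n' + ((∑ q ∈ T ∩ Wt, c q) / n'
        + ρs * (∑ q ∈ A i ∩ (Wt \ T), ν q)) ≤ b0 := by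
    intro i hi Wt hWt
    have hc1 : ∑ q ∈ T ∩ Wt, c q + ∑ q ∈ (T ∩ W) \ Wt, c q = ∑ q ∈ T ∩ W, c q := by
      have h2 := Finset.sum_inter_add_sum_sdiff (T ∩ W) Wt c
      have h3 : (T ∩ W) ∩ Wt = T ∩ Wt := by
        ext q
        simp only [Finset.mem_inter]
        exact ⟨fun h => ⟨h.1.1, h.2⟩, fun h => ⟨⟨h.1, hWt h.2⟩, h.2⟩⟩
      rwa [h3] at h2
    have hV1 : A i ∩ (Wt \ T) ⊆ A i ∩ (W \ T) := by
      intro q hq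
      simp only [Finset.mem_inter, Finset.mem_sdiff] at *
      exact ⟨hq.1, hWt hq.2.1, hq.2.2⟩
    have hV2 : ∑ q ∈ A i ∩ (Wt \ T), ν q ≤ ∑ q ∈ A i ∩ (W \ T), ν q :=
      Finset.sum_le_sum_of_subset_of_nonneg hV1 (fun q _ _ => (hνpos q).le)
    have hAW : ∑ q ∈ T ∩ W, ν q + ∑ q ∈ A i ∩ (W \ T), ν q = ∑ q ∈ A i ∩ W, ν q := by
      have h2 := Finset.sum_inter_add_sum_sdiff (A i ∩ W) T ν
      have h3 : (A i ∩ W) ∩ T = T ∩ W := by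
        ext q
        simp only [Finset.mem_inter]
        exact ⟨fun h => ⟨h.2, h.1.2⟩, fun h => ⟨⟨hsubT i hi h.1, h.2⟩, h.1⟩⟩
      have h4 : (A i ∩ W) \ T = A i ∩ (W \ T) := by
        ext q
        simp only [Finset.mem_inter, Finset.mem_sdiff]
        tauto
      rw [h3, h4] at h2
      exact h2
    have hμT : μ T = ∑ q ∈ T ∩ W, ν q + ∑ q ∈ T \ W, ν q := by
      rw [hμsum T]; exact (Finset.sum_inter_add_sum_sdiff T W ν).symm
    have hH := H' i hi pstar hpstarS
    rw [hμsum (A i ∩ W)] at hH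
    have hV3 : ∑ q ∈ A i ∩ (W \ T), ν q ≤ ∑ q ∈ T \ W, ν q - ν pstar := by linarith
    -- rate-sum bound
    have hr1 : ∑ q ∈ T \ W, n' * (ρs * ν q) ≤ ∑ q ∈ T \ W, c q :=
      Finset.sum_le_sum hρsq
    have hmulsum : ∑ q ∈ T \ W, n' * (ρs * ν q) = n' * (ρs * ∑ q ∈ T \ W, ν q) := by
      simp only [Finset.mul_sum]
    have hps : ν p₁ ≤ ν pstar := hpstarmax p₁ hp₁S
    have hr2 : n' * (ρs * (∑ q ∈ T \ W, ν q - ν pstar)) ≤ (∑ q ∈ T \ W, c q) - c p₁ := by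
      have h5 : n' * (ρs * ν p₁) ≤ n' * (ρs * ν pstar) := by
        have := mul_le_mul_of_nonneg_left hps (mul_nonneg hn'.le hρs_pos.le)
        calc n' * (ρs * ν p₁) = n' * ρs * ν p₁ := by ring
        _ ≤ n' * ρs * ν pstar := this
        _ = n' * (ρs * ν pstar) := by ring
      have h6 : n' * (ρs * (∑ q ∈ T \ W, ν q - ν pstar))
          = n' * (ρs * ∑ q ∈ T \ W, ν q) - n' * (ρs * ν pstar) := by ring
      rw [h6]
      rw [hρsν] at h5
      linarith [hmulsum ▸ hr1]
    have hcT : ∑ q ∈ T ∩ W, c q + ∑ q ∈ T \ W, c q = ∑ q ∈ T, c q :=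
      Finset.sum_inter_add_sum_sdiff T W c
    have hcb : ∑ q ∈ T, c q ≤ n' * b0 := by
      have h7 : ABB.costOf c T ≤ (n' / (Fintype.card V : ℝ)) * b := hcost
      have hnb : (n' / (Fintype.card V : ℝ)) * b = n' * b0 := by
        rw [hb0_def]; ring
      rw [ABB.costOf] at h7
      linarith
    -- assemble
    have hVi : ∑ q ∈ A i ∩ (Wt \ T), ν q ≤ ∑ q ∈ T \ W, ν q - ν pstar :=
      le_trans hV2 hV3
    have h8 : n' * (ρs * ∑ q ∈ A i ∩ (Wt \ T), ν q)
        ≤ n' * (ρs * (∑ q ∈ T \ W, ν q - ν pstar)) := by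
      have := mul_le_mul_of_nonneg_left hVi (mul_nonneg hn'.le hρs_pos.le)
      calc n' * (ρs * ∑ q ∈ A i ∩ (Wt \ T), ν q)
          = n' * ρs * ∑ q ∈ A i ∩ (Wt \ T), ν q := by ring
      _ ≤ n' * ρs * (∑ q ∈ T \ W, ν q - ν pstar) := this
      _ = n' * (ρs * (∑ q ∈ T \ W, ν q - ν pstar)) := by ring
    have hfinal : (c p₁ + ∑ q ∈ (T ∩ W) \ Wt, c q) + (∑ q ∈ T ∩ Wt, c q)
        + n' * (ρs * ∑ q ∈ A i ∩ (Wt \ T), ν q) ≤ n' * b0 := by linarith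
    have h9 : (c p₁ + ∑ q ∈ (T ∩ W) \ Wt, c q) / n' + ((∑ q ∈ T ∩ Wt, c q) / n'
        + ρs * (∑ q ∈ A i ∩ (Wt \ T), ν q))
        = ((c p₁ + ∑ q ∈ (T ∩ W) \ Wt, c q) + (∑ q ∈ T ∩ Wt, c q)
          + n' * (ρs * ∑ q ∈ A i ∩ (Wt \ T), ν q)) / n' := by
      field_simp
      ring
    rw [h9]
    rw [div_le_iff₀ hn']
    calc (c p₁ + ∑ q ∈ (T ∩ W) \ Wt, c q) + (∑ q ∈ T ∩ Wt, c q)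
        + n' * (ρs * ∑ q ∈ A i ∩ (Wt \ T), ν q) ≤ n' * b0 := hfinal
    _ = b0 * n' := by ring
  -- p₁ is always affordable at rate at most ρs while the group keeps its reserves
  have haffp₁ : ∀ f : V → ℝ, (∀ j, 0 ≤ f j) → (∀ j ∈ N', c p₁ / n' ≤ f j) →
      ∃ ρh : ℝ, 0 ≤ ρh ∧ ρh ≤ ρs ∧ ABB.Affordable A c μ f p₁ ρh := by
    intro f hf0 hfth
    have hNsub : N' ⊆ ABB.approvers A p₁ := by
      intro j hj
      simp only [ABB.approvers, Finset.mem_filter, Finset.mem_univ, true_and]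
      exact hsubT j hj hp₁T
    set g : ℝ → ℝ := fun ρ => ∑ j ∈ ABB.approvers A p₁, min (f j) (ρ * μ {p₁}) with hg
    have hgcont : Continuous g := by
      apply continuous_finset_sum
      intro j _
      exact Continuous.min continuous_const (continuous_id.mul continuous_const)
    have hg0 : g 0 = 0 := by
      rw [hg]
      simp only [zero_mul]
      apply Finset.sum_eq_zero
      intro j _
      exact min_eq_right (hf0 j)
    have hρsn : ρs * μ {p₁} = c p₁ / n' := by
      have : ν p₁ = μ {p₁} := rfl
      rw [← this]
      rw [eq_div_iff (ne_of_gt hn')]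
      calc ρs * ν p₁ * n' = n' * (ρs * ν p₁) := by ring
      _ = c p₁ := hρsν
    have hgρs : c p₁ ≤ g ρs := by
      have hterm : ∀ j ∈ N', min (f j) (ρs * μ {p₁}) = c p₁ / n' := by
        intro j hj
        rw [hρsn]
        exact min_eq_right (hfth j hj)
      have hsum1 : ∑ j ∈ N', min (f j) (ρs * μ {p₁}) = c p₁ := by
        rw [Finset.sum_congr rfl hterm, Finset.sum_const, nsmul_eq_mul]
        field_simp
        rw [hn'_def]; ring
      have hsum2 : ∑ j ∈ N', min (f j) (ρs * μ {p₁}) ≤ g ρs := by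
        apply Finset.sum_le_sum_of_subset_of_nonneg hNsub
        intro j _ _
        exact le_min (hf0 j) (by rw [hρsn]; exact div_nonneg (hc p₁).le hn'.le)
      linarith
    have hIVT := intermediate_value_Icc hρs_pos.le hgcont.continuousOn
    have hmem : c p₁ ∈ Set.Icc (g 0) (g ρs) := ⟨by rw [hg0]; exact (hc p₁).le, hgρs⟩
    obtain ⟨ρh, hρhmem, hρheq⟩ := hIVT hmem
    exact ⟨ρh, hρhmem.1, hρhmem.2, hρheq⟩
  -- main invariant, by induction along the MES run
  have key : ∀ Wt : Finset P, ∀ budt : V → ℝ,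
      ABB.MESReach A c μ b0 Wt budt → Wt ⊆ W →
      ∀ i ∈ N', b0 - (∑ q ∈ T ∩ Wt, c q) / n'
        - ρs * (∑ q ∈ A i ∩ (Wt \ T), ν q) ≤ budt i := by
    intro Wt budt hre
    induction hre with
    | init =>
      intro _ i _
      simp only [Finset.inter_empty, Finset.empty_sdiff, Finset.sum_empty]
      simp
    | @step W0 bud0 p ρ h hp hρ haff hmin ih =>
      intro hsub
      have hsub0 : W0 ⊆ W := (Finset.subset_insert p W0).trans hsub
      have hkey0 := ih hsub0
      have hpW : p ∈ W := hsub (Finset.mem_insert_self p W0)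
      have hpos0 : ∀ j, 0 ≤ bud0 j := mes_bud_nonneg hb0.le h
      have hthresh : ∀ j ∈ N', (c p₁ + ∑ q ∈ (T ∩ W) \ W0, c q) / n' ≤ bud0 j := by
        intro j hj
        have h1 := hkey0 j hj
        have h2 := harith j hj W0 hsub0
        linarith
      have hth0 : ∀ j ∈ N', c p₁ / n' ≤ bud0 j := by
        intro j hj
        refine le_trans ?_ (hthresh j hj)
        have hnn : 0 ≤ (∑ q ∈ (T ∩ W) \ W0, c q) / n' :=
          div_nonneg (Finset.sum_nonneg (fun q _ => (hc q).le)) hn'.le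
        rw [add_div]
        linarith
      have hρρs : ρ ≤ ρs := by
        have hp₁W0 : p₁ ∉ W0 := fun hmem => hp₁W (hsub0 hmem)
        obtain ⟨ρh, h0, hle, haf⟩ := haffp₁ bud0 hpos0 hth0
        exact le_trans (hmin p₁ hp₁W0 ρh h0 haf) hle
      intro i hi
      dsimp only
      by_cases hpT : p ∈ T
      · -- purchased project belongs to T; every group member pays at most c p / n'
        have hpAi : p ∈ A i := hsubT i hi hpT
        rw [if_pos hpAi]
        have hpTW0 : p ∈ (T ∩ W) \ W0 := by
          simp only [Finset.mem_sdiff, Finset.mem_inter]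
          exact ⟨⟨hpT, hpW⟩, hp⟩
        have hcple : c p ≤ ∑ q ∈ (T ∩ W) \ W0, c q :=
          Finset.single_le_sum (fun q _ => (hc q).le) hpTW0
        have hNsub : N' ⊆ ABB.approvers A p := by
          intro j hj
          simp only [ABB.approvers, Finset.mem_filter, Finset.mem_univ, true_and]
          exact hsubT j hj hpT
        have hsumle : ∑ j ∈ N', min (bud0 j) (ρ * μ {p}) ≤ c p := by
          rw [← haff]
          exact Finset.sum_le_sum_of_subset_of_nonneg hNsub
            (fun j _ _ => le_min (hpos0 j) (mul_nonneg hρ (hνpos p).le))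
        have hclaimA : ∀ j ∈ N', ρ * μ {p} ≤ bud0 j := by
          by_contra hA
          push_neg at hA
          obtain ⟨j₀, hj₀, hlt⟩ := hA
          have hbig : (c p₁ + c p) / n' ≤ ρ * μ {p} := by
            refine le_trans ?_ hlt.le
            refine le_trans ?_ (hthresh j₀ hj₀)
            rw [div_le_div_iff_of_pos_right hn']
            linarith
          have heach : ∀ j ∈ N', (c p₁ + c p) / n' ≤ min (bud0 j) (ρ * μ {p}) := by
            intro j hj
            refine le_min ?_ hbig
            refine le_trans ?_ (hthresh j hj)
            rw [div_le_div_iff_of_pos_right hn']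
            linarith
          have hsum_ge : (N'.card : ℝ) * ((c p₁ + c p) / n')
              ≤ ∑ j ∈ N', min (bud0 j) (ρ * μ {p}) := by
            have := Finset.card_nsmul_le_sum N' _ _ heach
            rwa [nsmul_eq_mul] at this
          have hcanc : (N'.card : ℝ) * ((c p₁ + c p) / n') = c p₁ + c p := by
            rw [← hn'_def]
            field_simp
          rw [hcanc] at hsum_ge
          linarith [hc p₁]
        have hpay : min (bud0 i) (ρ * μ {p}) ≤ c p / n' := by
          have hsum_eq : ∑ j ∈ N', min (bud0 j) (ρ * μ {p})
              = (N'.card : ℝ) * (ρ * μ {p}) := by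
            rw [Finset.sum_congr rfl (fun j hj => min_eq_right (hclaimA j hj)),
              Finset.sum_const, nsmul_eq_mul]
          have h10 : (N'.card : ℝ) * (ρ * μ {p}) ≤ c p := by
            rw [← hsum_eq]; exact hsumle
          have h11 : ρ * μ {p} ≤ c p / n' := by
            rw [le_div_iff₀ hn']
            calc ρ * μ {p} * n' = n' * (ρ * μ {p}) := by ring
            _ ≤ c p := by rw [← hn'_def] at h10; exact h10
          exact le_trans (min_le_right _ _) h11
        have hTins : T ∩ insert p W0 = insert p (T ∩ W0) := by
          ext q
          simp only [Finset.mem_inter, Finset.mem_insert]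
          constructor
          · rintro ⟨hq, rfl | hq'⟩
            · exact Or.inl rfl
            · exact Or.inr ⟨hq, hq'⟩
          · rintro (rfl | ⟨hq, hq'⟩)
            · exact ⟨hpT, Or.inl rfl⟩
            · exact ⟨hq, Or.inr hq'⟩
        have hsdiff : insert p W0 \ T = W0 \ T := by
          ext q
          simp only [Finset.mem_sdiff, Finset.mem_insert]
          constructor
          · rintro ⟨rfl | hq, hq'⟩
            · exact absurd hpT hq'
            · exact ⟨hq, hq'⟩
          · rintro ⟨hq, hq'⟩
            exact ⟨Or.inr hq, hq'⟩
        have hpnotTW0 : p ∉ T ∩ W0 := by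
          simp only [Finset.mem_inter]
          exact fun hmem => hp hmem.2
        rw [hTins, hsdiff, Finset.sum_insert hpnotTW0]
        have hbase := hkey0 i hi
        rw [add_div]
        linarith
      · -- purchased project outside T
        have hTins : T ∩ insert p W0 = T ∩ W0 := by
          ext q
          simp only [Finset.mem_inter, Finset.mem_insert]
          constructor
          · rintro ⟨hq, rfl | hq'⟩
            · exact absurd hq hpT
            · exact ⟨hq, hq'⟩
          · rintro ⟨hq, hq'⟩
            exact ⟨hq, Or.inr hq'⟩
        rw [hTins]
        have hbase := hkey0 i hi
        by_cases hpAi : p ∈ A i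
        · rw [if_pos hpAi]
          have hAins : A i ∩ (insert p W0 \ T) = insert p (A i ∩ (W0 \ T)) := by
            ext q
            simp only [Finset.mem_inter, Finset.mem_sdiff, Finset.mem_insert]
            constructor
            · rintro ⟨hq, rfl | hq', hq''⟩
              · exact Or.inl rfl
              · exact Or.inr ⟨hq, hq', hq''⟩
            · rintro (rfl | ⟨hq, hq', hq''⟩)
              · exact ⟨hpAi, Or.inl rfl, hpT⟩
              · exact ⟨hq, Or.inr hq', hq''⟩
          have hpnotin : p ∉ A i ∩ (W0 \ T) := by
            simp only [Finset.mem_inter, Finset.mem_sdiff]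
            exact fun hmem => hp hmem.2.1
          rw [hAins, Finset.sum_insert hpnotin]
          have hpayν : min (bud0 i) (ρ * μ {p}) ≤ ρs * ν p := by
            refine le_trans (min_le_right _ _) ?_
            have : ρ * ν p ≤ ρs * ν p :=
              mul_le_mul_of_nonneg_right hρρs (hνpos p).le
            exact this
          have hdistr : ρs * (ν p + ∑ q ∈ A i ∩ (W0 \ T), ν q)
              = ρs * ν p + ρs * ∑ q ∈ A i ∩ (W0 \ T), ν q := by ring
          rw [hdistr]
          linarith
        · rw [if_neg hpAi]
          have hAins : A i ∩ (insert p W0 \ T) = A i ∩ (W0 \ T) := by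
            ext q
            simp only [Finset.mem_inter, Finset.mem_sdiff, Finset.mem_insert]
            constructor
            · rintro ⟨hq, rfl | hq', hq''⟩
              · exact absurd hq hpAi
              · exact ⟨hq, hq', hq''⟩
            · rintro ⟨hq, hq', hq''⟩
              exact ⟨hq, Or.inr hq', hq''⟩
          rw [hAins]
          exact hbase
  -- conclude: p₁ would still be affordable at the end
  have hkeyW := key W bud hreach (Finset.Subset.refl W)
  have hposW : ∀ j, 0 ≤ bud j := mes_bud_nonneg hb0.le hreach
  have hthW : ∀ j ∈ N', c p₁ / n' ≤ bud j := by
    intro j hj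
    have h1 := hkeyW j hj
    have h2 := harith j hj W (Finset.Subset.refl W)
    have h3 : (T ∩ W) \ W = ∅ :=
      Finset.sdiff_eq_empty_iff_subset.2 Finset.inter_subset_right
    rw [h3, Finset.sum_empty, add_zero] at h2
    linarith
  obtain ⟨ρh, h0, _, haf⟩ := haffp₁ bud hposW hthW
  exact hnoaff p₁ hp₁W ρh h0 haf
end

section
/- Given an ABB instance and any satisfaction function μ, if an outcome W satisfies PJR-x with respect to μ, then W satisfies μ-Local-BPJR. -/
open Finset

/-- If an outcome satisfies PJR-x w.r.t. `μ`, then it satisfies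
`μ`-Local-BPJR. -/
theorem statement18 {V P : Type} [Fintype V] [DecidableEq V] [Fintype P] [DecidableEq P]
    (A : V → Finset P) (c : P → ℝ) (b : ℝ)
    (hn : 0 < Fintype.card V) (hc : ∀ p : P, 0 < c p) (hb : 0 < b)
    (μ : Finset P → ℝ) (hμ : ABB.IsSatFun μ)
    (W : Finset P) (hW : ABB.costOf c W ≤ b)
    (hPJRx : ABB.PJRx A c b μ W) :
    ABB.LocalBPJR A c b μ W := by
  rintro ⟨N', T, Wstar, ⟨hNne, hTA, hTcost⟩, hssub, hWA, hcost, hmax⟩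
  -- pick p ∈ Wstar \ (biUnion ∩ W)
  obtain ⟨p, hpW, hpnot⟩ := Finset.exists_of_ssubset hssub
  have hpbi : p ∈ N'.biUnion A := by
    obtain ⟨i, hi⟩ := hNne
    exact Finset.mem_biUnion.2 ⟨i, hi, hWA i hi hpW⟩
  have hpnW : p ∉ W := fun h => hpnot (Finset.mem_inter.2 ⟨hpbi, h⟩)
  -- N' is Wstar-cohesive
  have hcoh : ABB.Cohesive A c b N' Wstar :=
    ⟨hNne, hWA, le_trans hcost hTcost⟩
  have hlt := hPJRx N' Wstar hcoh p (Finset.mem_sdiff.2 ⟨hpW, hpnW⟩)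
  set S := insert p (W ∩ N'.biUnion A) with hS
  have hsub' : S ⊆ Wstar := by
    intro q hq
    rcases Finset.mem_insert.1 hq with h | h
    · exact h ▸ hpW
    · exact hssub.1 (by rw [Finset.inter_comm]; exact h)
  have hScost : ABB.costOf c S ≤ ABB.costOf c T := by
    refine le_trans ?_ hcost
    exact Finset.sum_le_sum_of_subset_of_nonneg hsub' (fun q _ _ => (hc q).le)
  have hSA : ∀ i ∈ N', S ⊆ A i := fun i hi => (hsub'.trans (hWA i hi))
  exact absurd (hmax S hSA hScost) (not_le.2 hlt)
end

section
/- Given an ABB instance, if an outcome W satisfies PJR-x with respect to the cost-based satisfaction function μ^c, then W satisfies μ-Local-BPJR for every satisfaction function μ. -/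
open Finset

/-- If an outcome satisfies PJR-x w.r.t. the cost-based satisfaction
function `μ^c`, then it satisfies `μ`-Local-BPJR for every satisfaction function `μ`. -/
theorem statement19 {V P : Type} [Fintype V] [DecidableEq V] [Fintype P] [DecidableEq P]
    (A : V → Finset P) (c : P → ℝ) (b : ℝ)
    (hn : 0 < Fintype.card V) (hc : ∀ p : P, 0 < c p) (hb : 0 < b)
    (W : Finset P) (hW : ABB.costOf c W ≤ b)
    (hPJRx : ABB.PJRx A c b (ABB.costOf c) W) :
    ∀ μ : Finset P → ℝ, ABB.IsSatFun μ → ABB.LocalBPJR A c b μ W := by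
  intro μ _ ⟨N', T, Wstar, ⟨hNe, _, hTcost⟩, hssub, hWsubA, hWcost, _⟩
  obtain ⟨i0, hi0⟩ := hNe
  -- N' is Wstar-cohesive
  have hcoh : ABB.Cohesive A c b N' Wstar :=
    ⟨⟨i0, hi0⟩, hWsubA, le_trans hWcost hTcost⟩
  -- pick p ∈ Wstar \ (biUnion A ∩ W)
  obtain ⟨p, hpW, hpnot⟩ := Finset.exists_of_ssubset hssub
  have hpA : p ∈ N'.biUnion A := Finset.mem_biUnion.2 ⟨i0, hi0, hWsubA i0 hi0 hpW⟩
  have hpnW : p ∉ W := fun h => hpnot (Finset.mem_inter.2 ⟨hpA, h⟩)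
  have hkey := hPJRx N' Wstar hcoh p (Finset.mem_sdiff.2 ⟨hpW, hpnW⟩)
  -- but insert p (W ∩ biUnion A) ⊆ Wstar
  have hsub : insert p (W ∩ N'.biUnion A) ⊆ Wstar := by
    intro q hq
    rcases Finset.mem_insert.1 hq with h | h
    · exact h ▸ hpW
    · exact hssub.1 (by rw [Finset.inter_comm]; exact h)
  have hmono : ABB.costOf c (insert p (W ∩ N'.biUnion A)) ≤ ABB.costOf c Wstar :=
    Finset.sum_le_sum_of_subset_of_nonneg hsub (fun q _ _ => (hc q).le)
  exact absurd (lt_of_lt_of_le hkey hmono) (lt_irrefl _)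
end
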